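/- Undecidability of overspecification detection: under the non-triviality assumptions (existence of x₀, s₀, y⁺, padding symbol # with s₀ ∈ S(x₀#ⁿ) \ W(x₀#ⁿ) for all n, V(y⁺,s₀)=1, V(y⁺,s) ≥ 0, V(ε,s)=0), the set of indices e of total computable functions f_e such that ∃ x, v_bw(x, f_e(x)) > 0 is not decidable; equivalently, the halting problem many-one reduces to this set via the map sending ⟨M,w⟩ to an index for the function that outputs y⁺ on inputs x₀#ⁿ when M halts on w within n² steps and ε otherwise. -/

import Mathlib

variable {A : Type*} [Primcodable A] [DecidableEq A]

/-- Beyond-warrant overspecification score. -/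
def vbw (S W : List A → Finset (List A)) (V : List A → List A → ℤ)
    (x y : List A) : ℤ :=
  ∑ s ∈ S x \ W x, V y s

/-- Padded instance family `x₀ #ⁿ`. -/
def pad (x₀ : List A) (hash : A) (n : ℕ) : List A :=
  x₀ ++ List.replicate n hash

theorem stmt_10 (S W : List A → Finset (List A)) (V : List A → List A → ℤ)
    (hW : ∀ x, W x ⊆ S x)
    (hV : ∀ y s, V y s = -1 ∨ V y s = 0 ∨ V y s = 1)
    (x₀ s₀ yplus : List A) (hash : A)
    (hwit : ∀ n, s₀ ∈ S (pad x₀ hash n) \ W (pad x₀ hash n))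
    (hone : V yplus s₀ = 1)
    (hpos : ∀ s, 0 ≤ V yplus s)
    (heps : ∀ s, V [] s = 0)
    -- an effective enumeration of (total computable) pipelines, with s-m-n:
    (fe : ℕ → List A → List A)
    (hsmn : ∀ F : ℕ → List A → List A, Computable₂ F →
      ∃ r : ℕ → ℕ, Computable r ∧ ∀ m x, fe (r m) x = F m x) :
    ¬ ComputablePred (fun e : ℕ => ∃ x, 0 < vbw S W V x (fe e x)) := by
  classical
  intro hP
  -- the reduction function
  set F : ℕ → List A → List A := fun m x =>
    if (Nat.Partrec.Code.evaln x.length (Denumerable.ofNat Nat.Partrec.Code m) 0).isSome then yplus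
    else [] with hF
  have hFcomp : Computable₂ F := by
    have h1 : Primrec fun p : ℕ × List A =>
        Nat.Partrec.Code.evaln p.2.length (Denumerable.ofNat Nat.Partrec.Code p.1) 0 := by
      have := Nat.Partrec.Code.primrec_evaln
      exact this.comp (Primrec.pair
        (Primrec.pair (Primrec.list_length.comp Primrec.snd)
          ((Primrec.ofNat _).comp Primrec.fst)) (Primrec.const 0))
    have h2 : Primrec fun p : ℕ × List A =>
        cond (Nat.Partrec.Code.evaln p.2.length (Denumerable.ofNat Nat.Partrec.Code p.1)
          0).isSome yplus [] :=
      Primrec.cond (Primrec.option_isSome.comp h1) (Primrec.const yplus) (Primrec.const [])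
    have h3 : Primrec₂ F := h2.of_eq fun p => by simp [hF, Bool.cond_eq_ite]
    exact h3.to_comp
  obtain ⟨r, hr, hre⟩ := hsmn F hFcomp
  have key : ∀ m : ℕ, (∃ x, 0 < vbw S W V x (fe (r m) x)) ↔
      ((Denumerable.ofNat Nat.Partrec.Code m).eval 0).Dom := by
    intro m
    constructor
    · rintro ⟨x, hx⟩
      rw [hre] at hx
      by_cases h : (Nat.Partrec.Code.evaln x.length (Denumerable.ofNat Nat.Partrec.Code m) 0).isSome
      · obtain ⟨y, hy⟩ := Option.isSome_iff_exists.1 h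
        exact Part.dom_iff_mem.2 ⟨y, Nat.Partrec.Code.evaln_sound hy⟩
      · exfalso
        have : F m x = [] := by simp [hF, h]
        rw [this] at hx
        simp [vbw, heps] at hx
    · intro hd
      obtain ⟨y, hy⟩ := Part.dom_iff_mem.1 hd
      obtain ⟨k, hk⟩ := Nat.Partrec.Code.evaln_complete.1 hy
      refine ⟨pad x₀ hash k, ?_⟩
      rw [hre]
      have hlen : k ≤ (pad x₀ hash k).length := by simp [pad]
      have hsome : (Nat.Partrec.Code.evaln (pad x₀ hash k).length
          (Denumerable.ofNat Nat.Partrec.Code m) 0).isSome := by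
        rw [Option.isSome_iff_exists]
        exact ⟨y, Nat.Partrec.Code.evaln_mono hlen hk⟩
      have hFy : F m (pad x₀ hash k) = yplus := by simp [hF, hsome]
      rw [hFy]
      calc (0:ℤ) < 1 := one_pos
        _ = V yplus s₀ := hone.symm
        _ ≤ vbw S W V (pad x₀ hash k) yplus :=
          Finset.single_le_sum (fun s _ => hpos s) (hwit k)
  have hhalt : ComputablePred fun c : Nat.Partrec.Code => (c.eval 0).Dom := by
    obtain ⟨f, hf, hpf⟩ := ComputablePred.computable_iff.1 hP
    refine ComputablePred.computable_iff.2
      ⟨fun c => f (r (Encodable.encode c)),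
        hf.comp (hr.comp Computable.encode), funext fun c => ?_⟩
    have h1 := key (Encodable.encode c)
    rw [Denumerable.ofNat_encode] at h1
    rw [← propext h1]
    exact congrFun hpf _
  exact ComputablePred.halting_problem 0 hhalt
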